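/- Let p + V be an affine k-dimensional subspace of a Banach space X, and let {B_{r_i}(x_i)}_{i∈I} be a family of pairwise disjoint balls with r_i ≤ R, x_i ∈ B_R(p), and d(x_i, p + V) < r_i/2 for every i. Then Σ_{i∈I} r_i^k ≤ c(k) R^k for a constant c(k) depending only on k, not on the dimension of X. -/

import Mathlib

open Metric

/-- Disjoint balls lying close to a `k`-dimensional affine plane in a Banach space
admit a `k`-dimensional packing bound, with a constant depending only on `k`. -/
theorem packing_near_affine_plane (k : ℕ) :
    ∃ c : ℝ, 0 < c ∧
      ∀ (X : Type) [NormedAddCommGroup X] [NormedSpace ℝ X] [CompleteSpace X]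
        (V : Submodule ℝ X), FiniteDimensional ℝ V → Module.finrank ℝ V = k →
        ∀ (p : X) (R : ℝ), 0 < R →
        ∀ (ι : Type) (x : ι → X) (r : ι → ℝ),
          (∀ i, 0 < r i ∧ r i ≤ R) →
          (∀ i, x i ∈ closedBall p R) →
          (∀ i, Metric.infDist (x i) ((fun w => p + w) '' (V : Set X)) < r i / 2) →
          (Pairwise fun i j => Disjoint (ball (x i) (r i)) (ball (x j) (r j))) →
          ∀ s : Finset ι, ∑ i ∈ s, r i ^ k ≤ c * R ^ k := by
  refine ⟨4 ^ k, by positivity, ?_⟩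
  intro X _ _ _ V hVfin hVk p R hR ι x r hr hx hd hdisj s
  -- choose points on the plane close to the centers
  have hne : ((fun w => p + w) '' (V : Set X)).Nonempty :=
    ⟨p, 0, V.zero_mem, by simp⟩
  have hy : ∀ i, ∃ v, ∃ _ : v ∈ V, dist (x i) (p + v) < r i / 2 := by
    intro i
    obtain ⟨y, hyV, hdy⟩ := (Metric.infDist_lt_iff hne).1 (hd i)
    obtain ⟨v, hv, rfl⟩ := hyV
    exact ⟨v, hv, hdy⟩
  choose v hvV hvd using hy
  rcases Nat.eq_zero_or_pos k with hk0 | hkpos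
  · -- k = 0 : the plane is the single point p, so at most one ball
    subst hk0
    have hV : V = ⊥ := Submodule.finrank_eq_zero.1 hVk
    have hvp : ∀ i, dist (x i) p < r i / 2 := by
      intro i
      have h0 : v i = 0 := by simpa [hV] using hvV i
      have h1 := hvd i
      rwa [h0, add_zero] at h1
    have hcard : s.card ≤ 1 := by
      by_contra h
      push_neg at h
      obtain ⟨i, hi, j, hj, hij⟩ := Finset.one_lt_card.1 h
      have hpi : p ∈ ball (x i) (r i) := by
        rw [mem_ball, dist_comm]
        exact lt_of_lt_of_le (hvp i) (by linarith [(hr i).1])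
      have hpj : p ∈ ball (x j) (r j) := by
        rw [mem_ball, dist_comm]
        exact lt_of_lt_of_le (hvp j) (by linarith [(hr j).1])
      exact (hdisj hij).ne_of_mem hpi hpj rfl
    simp only [pow_zero, Finset.sum_const, nsmul_eq_mul, mul_one, one_mul]
    exact_mod_cast hcard
  · -- k ≥ 1 : volume argument inside V
    haveI : Nontrivial V := by
      apply Module.nontrivial_of_finrank_pos (R := ℝ)
      omega
    letI : MeasurableSpace V := borel V
    haveI : BorelSpace V := ⟨rfl⟩
    haveI : ProperSpace V := FiniteDimensional.proper ℝ V
    let μ : MeasureTheory.Measure V := MeasureTheory.Measure.addHaar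
    haveI : μ.IsAddHaarMeasure := inferInstance
    set u : ι → V := fun i => ⟨v i, hvV i⟩ with hu
    -- balls `ball (u i) (r i / 2)` in `V` are pairwise disjoint and inside `ball 0 (2R)`
    have hdist : ∀ (a b : V), dist a b = dist (a : X) (b : X) := fun a b => rfl
    have hnormu : ∀ i, ‖u i‖ < r i / 2 + R := by
      intro i
      have h1 : dist (p + v i) p ≤ dist (p + v i) (x i) + dist (x i) p :=
        dist_triangle _ _ _
      have h2 : dist (p + v i) p = ‖v i‖ := by
        simp [dist_eq_norm]
      have h3 : dist (p + v i) (x i) < r i / 2 := by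
        rw [dist_comm]; exact hvd i
      have h4 : dist (x i) p ≤ R := mem_closedBall.1 (hx i)
      have : ‖(u i : X)‖ < r i / 2 + R := by
        simp only [hu]
        calc ‖v i‖ = dist (p + v i) p := h2.symm
          _ ≤ dist (p + v i) (x i) + dist (x i) p := h1
          _ < r i / 2 + R := by linarith
      exact this
    have hsub : ∀ i, ball (u i) (r i / 2) ⊆ ball (0 : V) (2 * R) := by
      intro i w hw
      rw [mem_ball] at hw ⊢
      have h1 : dist w (0 : V) ≤ dist w (u i) + ‖u i‖ := by
        simpa [dist_eq_norm] using dist_triangle w (u i) 0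
      have := hnormu i
      have h2 := (hr i).2
      linarith
    have hdisjV : (↑s : Set ι).PairwiseDisjoint fun i => ball (u i) (r i / 2) := by
      intro i _ j _ hij
      refine Set.disjoint_left.2 fun w hwi hwj => ?_
      have hmem : ∀ l, w ∈ ball (u l) (r l / 2) → (p + (w : X)) ∈ ball (x l) (r l) := by
        intro l hw
        rw [mem_ball] at hw ⊢
        have h1 : dist (p + (w : X)) (x l) ≤
            dist (p + (w : X)) (p + v l) + dist (p + v l) (x l) := dist_triangle _ _ _
        have h2 : dist (p + (w : X)) (p + v l) = dist w (u l) := by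
          rw [hdist]; simp [dist_eq_norm]; rfl
        have h3 : dist (p + v l) (x l) < r l / 2 := by rw [dist_comm]; exact hvd l
        rw [h2] at h1
        linarith
      exact (hdisj hij).ne_of_mem (hmem i hwi) (hmem j hwj) rfl
    -- measure computation
    have hmball : ∀ (z : V) (t : ℝ), 0 ≤ t →
        μ (ball z t) = ENNReal.ofReal (t ^ k) * μ (ball 0 1) := by
      intro z t ht
      rw [MeasureTheory.Measure.addHaar_ball μ z ht, hVk]
    have hmeas : ∑ i ∈ s, μ (ball (u i) (r i / 2)) ≤ μ (ball (0 : V) (2 * R)) := by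
      rw [← MeasureTheory.measure_biUnion_finset hdisjV
        (fun i _ => measurableSet_ball)]
      exact MeasureTheory.measure_mono (Set.iUnion₂_subset fun i _ => hsub i)
    have hm0 : μ (ball (0 : V) 1) ≠ 0 :=
      (Metric.measure_ball_pos μ 0 one_pos).ne'
    have hmtop : μ (ball (0 : V) 1) ≠ ⊤ := MeasureTheory.measure_ball_lt_top.ne
    have key : ∑ i ∈ s, ENNReal.ofReal ((r i / 2) ^ k) ≤ ENNReal.ofReal ((2 * R) ^ k) := by
      rw [← ENNReal.mul_le_mul_iff_left hm0 hmtop, Finset.sum_mul]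
      calc ∑ i ∈ s, ENNReal.ofReal ((r i / 2) ^ k) * μ (ball 0 1)
          = ∑ i ∈ s, μ (ball (u i) (r i / 2)) := by
            refine Finset.sum_congr rfl fun i _ => ?_
            rw [hmball (u i) (r i / 2) (by linarith [(hr i).1])]
        _ ≤ μ (ball (0 : V) (2 * R)) := hmeas
        _ = ENNReal.ofReal ((2 * R) ^ k) * μ (ball 0 1) :=
            hmball 0 (2 * R) (by linarith)
    have hreal : ∑ i ∈ s, (r i / 2) ^ k ≤ (2 * R) ^ k := by
      rw [← ENNReal.ofReal_sum_of_nonneg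
        (fun i _ => pow_nonneg (by linarith [(hr i).1]) k)] at key
      exact (ENNReal.ofReal_le_ofReal_iff (by positivity)).1 key
    calc ∑ i ∈ s, r i ^ k = ∑ i ∈ s, (r i / 2) ^ k * 2 ^ k := by
          refine Finset.sum_congr rfl fun i _ => ?_
          rw [div_pow, div_mul_cancel₀]
          positivity
      _ ≤ (2 * R) ^ k * 2 ^ k := by
          rw [← Finset.sum_mul]
          exact mul_le_mul_of_nonneg_right hreal (by positivity)
      _ = 4 ^ k * R ^ k := by
          rw [mul_pow, show (4:ℝ) ^ k = 2 ^ k * 2 ^ k by rw [← mul_pow]; norm_num]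
          ring
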